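/- For a quaternion α = a₀ + I a₁ with a₀, a₁ ∈ ℝ, a₁ ≠ 0, and I ∈ 𝕊², the set {a₀ + J a₁ : J ∈ 𝕊²} equals the conjugacy class {r⁻¹ α r : r ∈ ℍ \ {0}}. -/

import Mathlib

open Quaternion

noncomputable def qi : ℍ[ℝ] := ⟨0,1,0,0⟩
noncomputable def qj : ℍ[ℝ] := ⟨0,0,1,0⟩

@[simp] private lemma qi_re : qi.re = 0 := rfl
@[simp] private lemma qi_imI : qi.imI = 1 := rfl
@[simp] private lemma qi_imJ : qi.imJ = 0 := rfl
@[simp] private lemma qi_imK : qi.imK = 0 := rfl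
@[simp] private lemma qj_re : qj.re = 0 := rfl
@[simp] private lemma qj_imI : qj.imI = 0 := rfl
@[simp] private lemma qj_imJ : qj.imJ = 1 := rfl
@[simp] private lemma qj_imK : qj.imK = 0 := rfl

private lemma pure_unit_sq {J : ℍ[ℝ]} (hre : J.re = 0) (hn : ‖J‖ = 1) : J * J = -1 := by
  have hns : Quaternion.normSq J = 1 := by
    rw [Quaternion.normSq_eq_norm_mul_self, hn]; ring
  have h : J.imI ^ 2 + J.imJ ^ 2 + J.imK ^ 2 = 1 := by
    have := Quaternion.normSq_def' J
    rw [hns, hre] at this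
    nlinarith [this]
  ext <;>
    simp [Quaternion.re_mul, Quaternion.imI_mul, Quaternion.imJ_mul, Quaternion.imK_mul, hre] <;>
    nlinarith [h]

private lemma conj_to_i {J : ℍ[ℝ]} (hre : J.re = 0) (hn : ‖J‖ = 1) :
    ∃ r : ℍ[ℝ], r ≠ 0 ∧ qi * r = r * J := by
  by_cases h : J = ⟨0,-1,0,0⟩
  · refine ⟨qj, ?_, ?_⟩
    · intro he
      have := congrArg QuaternionAlgebra.imJ he
      simp at this
    · have h1 : J.imI = -1 := by rw [h]
      have h2 : J.imJ = 0 := by rw [h]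
      have h3 : J.imK = 0 := by rw [h]
      ext <;> simp [hre, h1, h2, h3, Quaternion.re_mul, Quaternion.imI_mul, Quaternion.imJ_mul,
        Quaternion.imK_mul]
  · refine ⟨qi + J, ?_, ?_⟩
    · intro he
      apply h
      have hJ : J = -qi := eq_neg_of_add_eq_zero_right he
      rw [hJ]
      ext <;> simp
    · have hJ2 := pure_unit_sq hre hn
      have hi2 : qi * qi = -1 := by
        ext <;> simp [Quaternion.re_mul, Quaternion.imI_mul, Quaternion.imJ_mul,
          Quaternion.imK_mul]
      rw [mul_add, add_mul, hJ2, hi2, add_comm]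

private lemma conj_pure {I J : ℍ[ℝ]} (hIre : I.re = 0) (hIn : ‖I‖ = 1)
    (hJre : J.re = 0) (hJn : ‖J‖ = 1) :
    ∃ t : ℍ[ℝ], t ≠ 0 ∧ I * t = t * J := by
  obtain ⟨s, hs, hsI⟩ := conj_to_i hIre hIn
  obtain ⟨r, hr, hrJ⟩ := conj_to_i hJre hJn
  refine ⟨s⁻¹ * r, mul_ne_zero (inv_ne_zero hs) hr, ?_⟩
  apply mul_left_cancel₀ hs
  have hss : s * s⁻¹ = 1 := mul_inv_cancel₀ hs
  calc s * (I * (s⁻¹ * r)) = (s * I) * s⁻¹ * r := by noncomm_ring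
    _ = qi * (s * s⁻¹) * r := by rw [← hsI]; noncomm_ring
    _ = qi * r := by rw [hss, mul_one]
    _ = r * J := hrJ
    _ = s * (s⁻¹ * r * J) := by rw [← mul_assoc, ← mul_assoc, hss, one_mul]

private lemma re_mul_comm (a b : ℍ[ℝ]) : (a * b).re = (b * a).re := by
  simp only [Quaternion.re_mul]; ring

private lemma conj_affine (a₀ a₁ : ℝ) (I t : ℍ[ℝ]) (ht : t ≠ 0) :
    t⁻¹ * ((a₀ : ℍ[ℝ]) + a₁ • I) * t = (a₀ : ℍ[ℝ]) + a₁ • (t⁻¹ * I * t) := by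
  rw [mul_add, add_mul, mul_smul_comm, smul_mul_assoc]
  congr 1
  rw [mul_assoc, Quaternion.coe_commutes, ← mul_assoc, inv_mul_cancel₀ ht, one_mul]

theorem gauss_lucas_stmt2 (a₀ a₁ : ℝ) (ha : a₁ ≠ 0) (I : ℍ[ℝ])
    (hIre : I.re = 0) (hInorm : ‖I‖ = 1) :
    {q : ℍ[ℝ] | ∃ J : ℍ[ℝ], J.re = 0 ∧ ‖J‖ = 1 ∧ q = (a₀ : ℍ[ℝ]) + a₁ • J} =
      {q : ℍ[ℝ] | ∃ r : ℍ[ℝ], r ≠ 0 ∧ q = r⁻¹ * ((a₀ : ℍ[ℝ]) + a₁ • I) * r} := by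
  ext q
  simp only [Set.mem_setOf_eq]
  constructor
  · rintro ⟨J, hJre, hJn, rfl⟩
    obtain ⟨t, ht, hIt⟩ := conj_pure hIre hInorm hJre hJn
    refine ⟨t, ht, ?_⟩
    rw [conj_affine a₀ a₁ I t ht]
    have : t⁻¹ * I * t = J := by
      rw [mul_assoc, hIt, ← mul_assoc, inv_mul_cancel₀ ht, one_mul]
    rw [this]
  · rintro ⟨r, hr, rfl⟩
    refine ⟨r⁻¹ * I * r, ?_, ?_, ?_⟩
    · rw [re_mul_comm, ← mul_assoc, mul_inv_cancel₀ hr, one_mul, hIre]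
    · have hn : ‖r‖ ≠ 0 := norm_ne_zero_iff.mpr hr
      rw [norm_mul, norm_mul, norm_inv, hInorm]
      field_simp
    · rw [conj_affine a₀ a₁ I r hr]
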